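/- Fix n, m ≥ 0, integers a₁, …, a_m, and a time t₀ ∈ ℝ. Let h, h₁ : ℝ → ℂ, xⱼ : ℝ → ℂ (1 ≤ j ≤ n), qₗ : ℝ → ℂ (1 ≤ l ≤ m), and νⱼ : ℝ → ℂ be functions. Assume that at t₀ the values h(t₀), x₁(t₀), …, xₙ(t₀), q₁(t₀), …, q_m(t₀) satisfy: h(t₀) ≠ xⱼ(t₀), h(t₀) ≠ qₗ(t₀), xⱼ(t₀) ≠ x_k(t₀) for j ≠ k, xⱼ(t₀) ≠ qₗ(t₀), and h₁(t₀) ≠ 0. Assume the following derivatives exist at t₀: h has derivative Σⱼ 2νⱼ(t₀)/(h(t₀) − xⱼ(t₀)); h₁ has derivative −h₁(t₀)·Σⱼ 2νⱼ(t₀)/(h(t₀) − xⱼ(t₀))²; each x_k has derivative ν_k(t₀)·( Σ_{j≠k} 2/(x_k(t₀) − xⱼ(t₀)) + Σₗ aₗ/(x_k(t₀) − qₗ(t₀)) ) + Σ_{j≠k} 2νⱼ(t₀)/(x_k(t₀) − xⱼ(t₀)); and each qₗ has derivative Σⱼ 2νⱼ(t₀)/(qₗ(t₀) − xⱼ(t₀)).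 Then the function N(t) = h₁(t)² · ∏_{k=1}^{n} (h(t) − x_k(t))² · ∏_{l=1}^{m} (h(t) − qₗ(t))^{aₗ} (negative integer powers interpreted as reciprocals) is differentiable at t₀ with derivative 0. -/

import Mathlib

open Finset

private lemma sum_erase_antisymm {n : ℕ} (f : Fin n → Fin n → ℂ)
    (hf : ∀ k j, j ≠ k → f k j = -f j k) :
    ∑ k, ∑ j ∈ Finset.univ.erase k, f k j = 0 := by
  have hswap : (∑ k, ∑ j ∈ Finset.univ.erase k, f k j)
      = ∑ j : Fin n, ∑ k ∈ Finset.univ.erase j, f k j :=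
    Finset.sum_comm' (fun k j => by
      simp only [Finset.mem_univ, Finset.mem_erase, true_and, and_true]
      exact ⟨fun h => h.symm, fun h => h.symm⟩)
  have h2 : (∑ k, ∑ j ∈ Finset.univ.erase k, f k j)
      = -∑ k, ∑ j ∈ Finset.univ.erase k, f k j := by
    nth_rewrite 1 [hswap]
    rw [← Finset.sum_neg_distrib]
    refine Finset.sum_congr rfl fun j _ => ?_
    rw [← Finset.sum_neg_distrib]
    refine Finset.sum_congr rfl fun k hk => ?_
    exact hf k j (fun h => (Finset.mem_erase.mp hk).1 h.symm)
  exact add_self_eq_zero.mp (by linear_combination h2)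

private lemma termG (hh xk xj v w : ℂ) (h1 : hh - xk ≠ 0) (h2 : hh - xj ≠ 0) (h3 : xk - xj ≠ 0) :
    (-(4 * v / ((hh - xk) * (xk - xj))) - 4 * w / ((hh - xj) * (xk - xj))) * (hh - xk)
      = 2 * (2 * w / (hh - xj) - v * (2 / (xk - xj)) - 2 * w / (xk - xj)) := by
  field_simp
  ring

private lemma termF (hh xk ql v b : ℂ) (h1 : hh - xk ≠ 0) (h2 : xk - ql ≠ 0) :
    -(2 * v * b / ((hh - xk) * (xk - ql))) * (hh - xk) = 2 * -(v * (b / (xk - ql))) := by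
  field_simp

private lemma termD (hh xj ql v b : ℂ) (h1 : hh - xj ≠ 0) (h2 : hh - ql ≠ 0) (h3 : ql - xj ≠ 0) :
    b * (2 * v / (hh - xj) - 2 * v / (ql - xj)) / (hh - ql)
      = 2 * v * b / ((hh - xj) * (xj - ql)) := by
  have h4 : xj - ql ≠ 0 := fun h => h3 (by linear_combination -h)
  field_simp
  ring

private lemma termGanti (hh xk xj v w : ℂ) (h1 : hh - xk ≠ 0) (h2 : hh - xj ≠ 0)
    (h3 : xk - xj ≠ 0) :
    -(4 * v / ((hh - xk) * (xk - xj))) - 4 * w / ((hh - xj) * (xk - xj))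
      = -(-(4 * w / ((hh - xj) * (xj - xk))) - 4 * v / ((hh - xk) * (xj - xk))) := by
  have h4 : xj - xk ≠ 0 := fun h => h3 (by linear_combination -h)
  field_simp
  ring

private lemma sle0_key_identity (n m : ℕ) (H : ℂ) (X V : Fin n → ℂ) (Q : Fin m → ℂ)
    (A : Fin m → ℂ)
    (hDX : ∀ j, H - X j ≠ 0) (hDQ : ∀ l, H - Q l ≠ 0)
    (hXX : ∀ j k, j ≠ k → X j - X k ≠ 0) (hXQ : ∀ j l, X j - Q l ≠ 0) :
    (-2 * ∑ j, 2 * V j / (H - X j) ^ 2)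
    + (∑ k, 2 * ((∑ j, 2 * V j / (H - X j)) -
        (V k * ((∑ j ∈ univ.erase k, 2 / (X k - X j)) + ∑ l, A l / (X k - Q l)) +
          ∑ j ∈ univ.erase k, 2 * V j / (X k - X j))) / (H - X k))
    + (∑ l, A l * ((∑ j, 2 * V j / (H - X j)) - ∑ j, 2 * V j / (Q l - X j)) / (H - Q l)) = 0 := by
  have hQX : ∀ (l : Fin m) (j : Fin n), Q l - X j ≠ 0 := fun l j =>
    sub_ne_zero.mpr (Ne.symm (sub_ne_zero.mp (hXQ j l)))
  have hγ : ∀ k : Fin n, 2 * ((∑ j, 2 * V j / (H - X j)) -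
        (V k * ((∑ j ∈ univ.erase k, 2 / (X k - X j)) + ∑ l, A l / (X k - Q l)) +
          ∑ j ∈ univ.erase k, 2 * V j / (X k - X j))) / (H - X k)
      = 4 * V k / (H - X k) ^ 2
        + (∑ j ∈ univ.erase k,
            (-(4 * V k / ((H - X k) * (X k - X j))) - 4 * V j / ((H - X j) * (X k - X j))))
        + ∑ l, -(2 * V k * A l / ((H - X k) * (X k - Q l))) := by
    intro k
    have e1 : (∑ j ∈ univ.erase k,
          (-(4 * V k / ((H - X k) * (X k - X j))) - 4 * V j / ((H - X j) * (X k - X j))))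
        = (2 * ∑ j ∈ univ.erase k,
            (2 * V j / (H - X j) - V k * (2 / (X k - X j)) - 2 * V j / (X k - X j))) / (H - X k) := by
      rw [eq_div_iff (hDX k), Finset.sum_mul, Finset.mul_sum]
      refine Finset.sum_congr rfl fun j hj => ?_
      exact termG H (X k) (X j) (V k) (V j) (hDX k) (hDX j)
        (hXX k j (Ne.symm (Finset.mem_erase.mp hj).1))
    have e2 : (∑ l, -(2 * V k * A l / ((H - X k) * (X k - Q l))))
        = (2 * ∑ l, -(V k * (A l / (X k - Q l)))) / (H - X k) := by
      rw [eq_div_iff (hDX k), Finset.sum_mul, Finset.mul_sum]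
      exact Finset.sum_congr rfl fun l _ =>
        termF H (X k) (Q l) (V k) (A l) (hDX k) (hXQ k l)
    have e0 : 4 * V k / (H - X k) ^ 2 = 2 * (2 * V k / (H - X k)) / (H - X k) := by
      have := hDX k
      field_simp
      ring
    rw [e0, e1, e2, ← add_div, ← add_div]
    congr 1
    rw [← Finset.add_sum_erase univ (fun j => 2 * V j / (H - X j)) (Finset.mem_univ k)]
    simp only [Finset.sum_sub_distrib, Finset.sum_neg_distrib, mul_add, Finset.mul_sum]
    ring
  have hδ : ∀ l : Fin m,
      A l * ((∑ j, 2 * V j / (H - X j)) - ∑ j, 2 * V j / (Q l - X j)) / (H - Q l)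
      = ∑ k, 2 * V k * A l / ((H - X k) * (X k - Q l)) := by
    intro l
    rw [← Finset.sum_sub_distrib, Finset.mul_sum, Finset.sum_div]
    exact Finset.sum_congr rfl fun j _ =>
      termD H (X j) (Q l) (V j) (A l) (hDX j) (hDQ l) (hQX l j)
  rw [Finset.sum_congr rfl (fun k _ => hγ k), Finset.sum_congr rfl (fun l _ => hδ l),
    Finset.sum_add_distrib, Finset.sum_add_distrib]
  have c1 : -2 * (∑ j, 2 * V j / (H - X j) ^ 2) + ∑ k, 4 * V k / (H - X k) ^ 2 = 0 := by
    rw [Finset.mul_sum, ← Finset.sum_add_distrib]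
    exact Finset.sum_eq_zero fun j _ => by ring
  have cg : ∑ k, ∑ j ∈ Finset.univ.erase k,
      (-(4 * V k / ((H - X k) * (X k - X j))) - 4 * V j / ((H - X j) * (X k - X j))) = 0 := by
    refine sum_erase_antisymm _ fun k j hjk => ?_
    exact termGanti H (X k) (X j) (V k) (V j) (hDX k) (hDX j) (hXX k j (Ne.symm hjk))
  have cf : (∑ k, ∑ l, -(2 * V k * A l / ((H - X k) * (X k - Q l))))
      + ∑ l, ∑ k, 2 * V k * A l / ((H - X k) * (X k - Q l)) = 0 := by
    rw [Finset.sum_comm (s := (univ : Finset (Fin m))) (t := (univ : Finset (Fin n)))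
      (f := fun l k => 2 * V k * A l / ((H - X k) * (X k - Q l)))]
    simp only [Finset.sum_neg_distrib]
    exact neg_add_cancel _
  linear_combination c1 + cg + cf

/-- The observable
`N(t) = h₁(t)^2 ⬝ ∏_k (h(t) - x_k(t))^2 ⬝ ∏_l (h(t) - q_l(t))^(a l)`
has vanishing derivative at a time `t₀` at which the points are in general position and
the functions satisfy the multiple chordal SLE(0) Loewner evolution equations:
`h' = ∑_j 2 ν_j/(h - x_j)`, `h₁' = -h₁ ∑_j 2 ν_j/(h - x_j)^2`,
`x_k' = ν_k (∑_{j≠k} 2/(x_k - x_j) + ∑_l a_l/(x_k - q_l)) + ∑_{j≠k} 2 ν_j/(x_k - x_j)`,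
`q_l' = ∑_j 2 ν_j/(q_l - x_j)`. -/
theorem sle0_observable_hasDerivAt_zero (n m : ℕ) (a : Fin m → ℤ) (t₀ : ℝ)
    (h h₁ : ℝ → ℂ) (x : Fin n → ℝ → ℂ) (q : Fin m → ℝ → ℂ) (ν : Fin n → ℝ → ℂ)
    (hhx : ∀ j, h t₀ ≠ x j t₀) (hhq : ∀ l, h t₀ ≠ q l t₀)
    (hxx : ∀ j k, j ≠ k → x j t₀ ≠ x k t₀) (hxq : ∀ j l, x j t₀ ≠ q l t₀)
    (hh₁ : h₁ t₀ ≠ 0)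
    (hdh : HasDerivAt h (∑ j, 2 * ν j t₀ / (h t₀ - x j t₀)) t₀)
    (hdh₁ : HasDerivAt h₁ (-(h₁ t₀) * ∑ j, 2 * ν j t₀ / (h t₀ - x j t₀) ^ 2) t₀)
    (hdx : ∀ k, HasDerivAt (x k)
      (ν k t₀ * ((∑ j ∈ univ.erase k, 2 / (x k t₀ - x j t₀)) +
          ∑ l, (a l : ℂ) / (x k t₀ - q l t₀)) +
        ∑ j ∈ univ.erase k, 2 * ν j t₀ / (x k t₀ - x j t₀)) t₀)
    (hdq : ∀ l, HasDerivAt (q l) (∑ j, 2 * ν j t₀ / (q l t₀ - x j t₀)) t₀) :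
    HasDerivAt (fun t => h₁ t ^ 2 * (∏ k, (h t - x k t) ^ 2) *
      ∏ l, (h t - q l t) ^ (a l)) 0 t₀ := by
  have hDX : ∀ j, h t₀ - x j t₀ ≠ 0 := fun j => sub_ne_zero.mpr (hhx j)
  have hDQ : ∀ l, h t₀ - q l t₀ ≠ 0 := fun l => sub_ne_zero.mpr (hhq l)
  have hXX : ∀ j k, j ≠ k → x j t₀ - x k t₀ ≠ 0 := fun j k hjk => sub_ne_zero.mpr (hxx j k hjk)
  have hXQ : ∀ j l, x j t₀ - q l t₀ ≠ 0 := fun j l => sub_ne_zero.mpr (hxq j l)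
  -- the logarithmic derivatives
  set c1 : ℂ := -2 * ∑ j, 2 * ν j t₀ / (h t₀ - x j t₀) ^ 2 with hc1
  set γ : Fin n → ℂ := fun k => 2 * ((∑ j, 2 * ν j t₀ / (h t₀ - x j t₀)) -
      (ν k t₀ * ((∑ j ∈ univ.erase k, 2 / (x k t₀ - x j t₀)) +
          ∑ l, (a l : ℂ) / (x k t₀ - q l t₀)) +
        ∑ j ∈ univ.erase k, 2 * ν j t₀ / (x k t₀ - x j t₀))) / (h t₀ - x k t₀) with hγ
  set δ : Fin m → ℂ := fun l => (a l : ℂ) * ((∑ j, 2 * ν j t₀ / (h t₀ - x j t₀)) -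
      ∑ j, 2 * ν j t₀ / (q l t₀ - x j t₀)) / (h t₀ - q l t₀) with hδ
  have hP1 : HasDerivAt (fun t => h₁ t ^ 2) (h₁ t₀ ^ 2 * c1) t₀ := by
    have h0 := hdh₁.mul hdh₁
    simp only [← pow_two] at h0
    refine h0.congr_deriv ?_
    rw [hc1]
    ring
  have hP2k : ∀ k, HasDerivAt (fun t => (h t - x k t) ^ 2)
      ((h t₀ - x k t₀) ^ 2 * γ k) t₀ := by
    intro k
    have h0 := (hdh.sub (hdx k)).mul (hdh.sub (hdx k))
    simp only [← pow_two] at h0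
    refine h0.congr_deriv ?_
    rw [hγ]
    simp only [Pi.sub_apply]
    have := hDX k
    field_simp
    ring
  have hP2 : HasDerivAt (fun t => ∏ k, (h t - x k t) ^ 2)
      ((∏ k, (h t₀ - x k t₀) ^ 2) * ∑ k, γ k) t₀ := by
    have := HasDerivAt.fun_finsetProd (u := univ) (𝕜 := ℝ) (x := t₀)
      (f := fun k t => (h t - x k t) ^ 2)
      (f' := fun k => (h t₀ - x k t₀) ^ 2 * γ k) (fun k _ => hP2k k)
    refine this.congr_deriv ?_
    rw [Finset.mul_sum]
    refine Finset.sum_congr rfl fun k _ => ?_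
    rw [smul_eq_mul, ← mul_assoc, Finset.prod_erase_mul _ _ (Finset.mem_univ k)]
  have hP3l : ∀ l, HasDerivAt (fun t => (h t - q l t) ^ (a l))
      ((h t₀ - q l t₀) ^ (a l) * δ l) t₀ := by
    intro l
    have hz := (hasDerivAt_zpow (a l) (h t₀ - q l t₀) (Or.inl (hDQ l)))
    have := hz.comp t₀ (hdh.sub (hdq l))
    refine this.congr_deriv ?_
    rw [hδ, zpow_sub_one₀ (hDQ l)]
    have := hDQ l
    field_simp
  have hP3 : HasDerivAt (fun t => ∏ l, (h t - q l t) ^ (a l))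
      ((∏ l, (h t₀ - q l t₀) ^ (a l)) * ∑ l, δ l) t₀ := by
    have := HasDerivAt.fun_finsetProd (u := univ) (𝕜 := ℝ) (x := t₀)
      (f := fun l t => (h t - q l t) ^ (a l))
      (f' := fun l => (h t₀ - q l t₀) ^ (a l) * δ l) (fun l _ => hP3l l)
    refine this.congr_deriv ?_
    rw [Finset.mul_sum]
    refine Finset.sum_congr rfl fun l _ => ?_
    rw [smul_eq_mul, ← mul_assoc, Finset.prod_erase_mul _ _ (Finset.mem_univ l)]
  have hN := (hP1.mul hP2).mul hP3
  have hkey := sle0_key_identity n m (h t₀) (fun j => x j t₀) (fun j => ν j t₀)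
    (fun l => q l t₀) (fun l => (a l : ℂ)) hDX hDQ hXX hXQ
  have hsum : c1 + (∑ k, γ k) + ∑ l, δ l = 0 := by
    rw [hc1, hγ, hδ]
    exact hkey
  have hzero : (h₁ t₀ ^ 2 * c1 * (∏ k, (h t₀ - x k t₀) ^ 2) +
        h₁ t₀ ^ 2 * ((∏ k, (h t₀ - x k t₀) ^ 2) * ∑ k, γ k)) *
        (∏ l, (h t₀ - q l t₀) ^ (a l)) +
      h₁ t₀ ^ 2 * (∏ k, (h t₀ - x k t₀) ^ 2) *
        ((∏ l, (h t₀ - q l t₀) ^ (a l)) * ∑ l, δ l) = 0 := by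
    linear_combination (h₁ t₀ ^ 2 * (∏ k, (h t₀ - x k t₀) ^ 2) *
      (∏ l, (h t₀ - q l t₀) ^ (a l))) * hsum
  exact hN.congr_deriv hzero
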